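/- Let β: 𝒳 → ℝ be measurable, X a random element of 𝒳, δ ∈ [0,1], and suppose q is a number with P[β(X) > q] = δ (i.e., the (1-δ)-quantile of β(X) is unique). Then for any measurable Δ: 𝒳 → [0,1] with E[Δ(X)] ≤ δ, we have E[1(β(X) > q) β(X)] ≥ E[Δ(X) β(X)], provided q ≥ 0. -/

import Mathlib

open MeasureTheory

/-- thresholding the priority score `β` at its unique `(1-δ)`-quantile `q ≥ 0`
maximizes `E[Δ(X)β(X)]` over all fractional contact rules `Δ : 𝒳 → [0,1]` with budget
`E[Δ(X)] ≤ δ`. -/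
theorem stmt_4 {Ω 𝒳 : Type*} [MeasurableSpace Ω] [MeasurableSpace 𝒳]
    (P : Measure Ω) [IsProbabilityMeasure P]
    (X : Ω → 𝒳) (hX : Measurable X)
    (β : 𝒳 → ℝ) (hβ : Measurable β) (hint : Integrable (fun ω => β (X ω)) P)
    (δ q : ℝ) (hδ : δ ∈ Set.Icc (0 : ℝ) 1) (hq0 : 0 ≤ q)
    (hq : P {ω | q < β (X ω)} = ENNReal.ofReal δ)
    (Δ : 𝒳 → ℝ) (hΔ : Measurable Δ) (hΔ01 : ∀ x, Δ x ∈ Set.Icc (0 : ℝ) 1)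
    (hbudget : (∫ ω, Δ (X ω) ∂P) ≤ δ) :
    (∫ ω, Δ (X ω) * β (X ω) ∂P)
      ≤ ∫ ω, (if q < β (X ω) then (1 : ℝ) else 0) * β (X ω) ∂P := by
  set g : Ω → ℝ := fun ω => if q < β (X ω) then (1 : ℝ) else 0 with hg
  have hs : MeasurableSet {ω | q < β (X ω)} :=
    measurableSet_lt measurable_const (hβ.comp hX)
  have hgmeas : Measurable g := Measurable.ite hs measurable_const measurable_const
  have hg01 : ∀ ω, g ω ∈ Set.Icc (0 : ℝ) 1 := by
    intro ω; simp only [hg]; split <;> simp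
  -- integrability facts
  have hbd : ∀ (f : Ω → ℝ), Measurable f → (∀ ω, f ω ∈ Set.Icc (0:ℝ) 1) →
      Integrable f P := by
    intro f hf hf01
    refine (integrable_const (1:ℝ)).mono' hf.aestronglyMeasurable ?_
    filter_upwards with ω
    have := hf01 ω
    rw [Real.norm_eq_abs, abs_of_nonneg this.1]
    exact this.2
  have hΔm : Measurable (fun ω => Δ (X ω)) := hΔ.comp hX
  have hΔint : Integrable (fun ω => Δ (X ω)) P := hbd _ hΔm (fun ω => hΔ01 (X ω))
  have hgint : Integrable g P := hbd _ hgmeas hg01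
  have hΔβint : Integrable (fun ω => Δ (X ω) * β (X ω)) P :=
    hint.bdd_mul hΔm.aestronglyMeasurable
      (c := 1) (ae_of_all _ fun ω => by
        have := hΔ01 (X ω)
        rw [Real.norm_eq_abs, abs_of_nonneg this.1]; exact this.2)
  have hgβint : Integrable (fun ω => g ω * β (X ω)) P :=
    hint.bdd_mul hgmeas.aestronglyMeasurable
      (c := 1) (ae_of_all _ fun ω => by
        have := hg01 ω
        rw [Real.norm_eq_abs, abs_of_nonneg this.1]; exact this.2)
  -- integral of g equals δ
  have hgδ : ∫ ω, g ω ∂P = δ := by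
    have : g = Set.indicator {ω | q < β (X ω)} (fun _ => (1:ℝ)) := by
      funext ω
      simp only [hg, Set.indicator_apply, Set.mem_setOf_eq]
    rw [this, integral_indicator_const _ hs, measureReal_def, hq, smul_eq_mul, mul_one,
      ENNReal.toReal_ofReal hδ.1]
  -- key nonnegativity
  have hkey : 0 ≤ ∫ ω, (g ω - Δ (X ω)) * (β (X ω) - q) ∂P := by
    refine integral_nonneg fun ω => ?_
    simp only [Pi.zero_apply]
    by_cases h : q < β (X ω)
    · have : g ω = 1 := by simp [hg, h]
      rw [this]
      exact mul_nonneg (by linarith [(hΔ01 (X ω)).2]) (by linarith)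
    · have : g ω = 0 := by simp [hg, h]
      rw [this]
      push_neg at h
      nlinarith [mul_nonneg (hΔ01 (X ω)).1 (show (0:ℝ) ≤ q - β (X ω) by linarith)]
  have hexp : (fun ω => (g ω - Δ (X ω)) * (β (X ω) - q))
      = fun ω => (g ω * β (X ω) - Δ (X ω) * β (X ω)) - q * (g ω - Δ (X ω)) := by
    funext ω; ring
  rw [hexp] at hkey
  have h1 : Integrable (fun ω => g ω * β (X ω) - Δ (X ω) * β (X ω)) P := hgβint.sub hΔβint
  have h2 : Integrable (fun ω => q * (g ω - Δ (X ω))) P := (hgint.sub hΔint).const_mul q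
  rw [integral_sub h1 h2, integral_sub hgβint hΔβint, integral_const_mul,
    integral_sub hgint hΔint, hgδ] at hkey
  have hq2 : 0 ≤ q * (δ - ∫ ω, Δ (X ω) ∂P) :=
    mul_nonneg hq0 (by linarith)
  linarith
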